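/- Let A = diag(λ₁,…,λₙ) be positive diagonal, W = (1/(λᵢ+λⱼ))ᵢⱼ, and X Hermitian such that Iₙ + W∘X is positive semi-definite (∘ = Hadamard product). Then the matrix B := A + X + (W∘X)A(W∘X) is positive semi-definite and satisfies log_A(B) = X, i.e., (AB)^{1/2} + (BA)^{1/2} − 2A = X. In other words, the Bures-Wasserstein exponential at A is exp_A(X) = A + X + (W∘X)A(W∘X). -/

import Mathlib

open Matrix Filter Asymptotics
open scoped ComplexOrder

/-- The PSD square root of a matrix (0 if not PSD). -/
noncomputable def msqrt {n : ℕ} (M : Matrix (Fin n) (Fin n) ℂ) : Matrix (Fin n) (Fin n) ℂ :=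
  letI := Classical.propDecidable M.PosSemidef
  if h : M.PosSemidef then
    (h.1.eigenvectorUnitary : Matrix (Fin n) (Fin n) ℂ) *
      Matrix.diagonal ((↑) ∘ Real.sqrt ∘ h.1.eigenvalues) *
      (star h.1.eigenvectorUnitary : Matrix (Fin n) (Fin n) ℂ)
  else 0

/-- `(AB)^{1/2} := A^{1/2} (A^{1/2} B A^{1/2})^{1/2} A^{-1/2}`. -/
noncomputable def sqAB {n : ℕ} (A B : Matrix (Fin n) (Fin n) ℂ) : Matrix (Fin n) (Fin n) ℂ :=
  msqrt A * msqrt (msqrt A * B * msqrt A) * (msqrt A)⁻¹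

/-- Bures-Wasserstein geodesic `A ◇_t B`. -/
noncomputable def geo {n : ℕ} (A B : Matrix (Fin n) (Fin n) ℂ) (t : ℝ) : Matrix (Fin n) (Fin n) ℂ :=
  ((1 - t)^2 : ℝ) • A + (t^2 : ℝ) • B + (t * (1 - t) : ℝ) • (sqAB A B + (sqAB A B)ᴴ)

/-- Bures-Wasserstein distance. -/
noncomputable def dBW {n : ℕ} (A B : Matrix (Fin n) (Fin n) ℂ) : ℝ :=
  Real.sqrt ((Matrix.trace A).re + (Matrix.trace B).re -
    2 * (Matrix.trace (msqrt (msqrt A * B * msqrt A))).re)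

open scoped MatrixOrder in
lemma msqrt_eq {n : ℕ} {M C : Matrix (Fin n) (Fin n) ℂ} (hC : C.PosSemidef)
    (h : C ^ 2 = M) : msqrt M = C := by
  have hM : M.PosSemidef := h ▸ hC.pow 2
  have key : CFC.sqrt M = C := CFC.sqrt_unique (by rw [← h, sq]) hC.nonneg
  rw [CFC.sqrt_eq_real_sqrt M hM.nonneg, cfcₙ_eq_cfc, hM.1.cfc_eq] at key
  rw [msqrt, dif_pos hM, ← key, IsHermitian.cfc, Unitary.conjStarAlgAut_apply]
  rfl

theorem stmt13 {n : ℕ} (lam : Fin n → ℝ) (hlam : ∀ i, 0 < lam i)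
    (X : Matrix (Fin n) (Fin n) ℂ) (hX : X.IsHermitian)
    (W : Matrix (Fin n) (Fin n) ℂ)
    (hW : W = Matrix.of fun i j => ((1 / (lam i + lam j) : ℝ) : ℂ))
    (A : Matrix (Fin n) (Fin n) ℂ)
    (hA : A = Matrix.diagonal fun i => ((lam i : ℝ) : ℂ))
    (hPSD : ((1 : Matrix (Fin n) (Fin n) ℂ) + Matrix.hadamard W X).PosSemidef) :
    (A + X + Matrix.hadamard W X * A * Matrix.hadamard W X).PosSemidef ∧
    sqAB A (A + X + Matrix.hadamard W X * A * Matrix.hadamard W X) +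
        (sqAB A (A + X + Matrix.hadamard W X * A * Matrix.hadamard W X))ᴴ -
        (2 : ℝ) • A = X := by
  set Y := Matrix.hadamard W X with hY
  set B := A + X + Y * A * Y with hBdef
  -- Y is Hermitian
  have hYH : (1 + Y)ᴴ = 1 + Y := hPSD.1
  -- A is Hermitian
  have hAH : Aᴴ = A := by
    rw [hA]
    exact (Matrix.isHermitian_diagonal_of_self_adjoint _
      (funext fun i => Complex.conj_ofReal _)).eq
  -- key identity X = Y*A + A*Y
  have hXeq : X = Y * A + A * Y := by
    ext i j
    have hne : ((lam j : ℝ) : ℂ) + ((lam i : ℝ) : ℂ) ≠ 0 := by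
      rw [← Complex.ofReal_add]
      exact Complex.ofReal_ne_zero.mpr
        (ne_of_gt (by have := hlam i; have := hlam j; linarith))
    simp only [Matrix.add_apply, hA, Matrix.mul_diagonal, Matrix.diagonal_mul, hY,
      Matrix.hadamard_apply, hW, Matrix.of_apply]
    push_cast
    field_simp
    rw [eq_div_iff (by rwa [add_comm] at hne)]
    ring
  -- B = (1+Y) * A * (1+Y)
  have hBfact : B = (1 + Y) * A * (1 + Y) := by
    rw [hBdef, hXeq]
    noncomm_ring
  have hApsd : A.PosSemidef := by
    rw [hA]
    exact Matrix.PosSemidef.diagonal fun i => by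
      simpa using Complex.zero_le_real.mpr (hlam i).le
  have hBpsd : B.PosSemidef := by
    rw [hBfact]
    have := hApsd.mul_mul_conjTranspose_same (1 + Y)
    rwa [hYH] at this
  refine ⟨hBpsd, ?_⟩
  -- the square root S of A
  set S : Matrix (Fin n) (Fin n) ℂ :=
    Matrix.diagonal (fun i => ((Real.sqrt (lam i) : ℝ) : ℂ)) with hSdef
  have hS2 : S ^ 2 = A := by
    have hss : ∀ i, ((Real.sqrt (lam i) : ℝ) : ℂ) * ((Real.sqrt (lam i) : ℝ) : ℂ)
        = ((lam i : ℝ) : ℂ) := fun i => by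
      norm_cast
      exact Real.mul_self_sqrt (hlam i).le
    rw [hSdef, hA, pow_two, Matrix.diagonal_mul_diagonal]
    simp only [hss]
  have hSH : Sᴴ = S := by
    rw [hSdef]
    exact (Matrix.isHermitian_diagonal_of_self_adjoint _
      (funext fun i => Complex.conj_ofReal _)).eq
  have hSpsd : S.PosSemidef := by
    rw [hSdef]
    exact Matrix.PosSemidef.diagonal fun i => by
      simpa using Complex.zero_le_real.mpr (Real.sqrt_nonneg _)
  have hmsqrtA : msqrt A = S := msqrt_eq hSpsd hS2
  -- S is invertible
  have hSinv : S * S⁻¹ = 1 := by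
    apply Matrix.mul_nonsing_inv
    rw [hSdef, Matrix.det_diagonal]
    apply isUnit_iff_ne_zero.mpr
    exact Finset.prod_ne_zero_iff.mpr fun i _ =>
      Complex.ofReal_ne_zero.mpr (Real.sqrt_ne_zero'.mpr (hlam i))
  -- C := S * (1+Y) * S
  set C : Matrix (Fin n) (Fin n) ℂ := S * (1 + Y) * S with hCdef
  have hCpsd : C.PosSemidef := by
    have := hPSD.mul_mul_conjTranspose_same S
    rwa [hSH] at this
  have hC2 : C ^ 2 = S * B * S := by
    rw [hCdef, hBfact, ← hS2]
    noncomm_ring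
  have hmsqrtSBS : msqrt (S * B * S) = C := msqrt_eq hCpsd hC2
  have hsq : sqAB A B = A + A * Y := by
    rw [sqAB, hmsqrtA, hmsqrtSBS, hCdef]
    calc S * (S * (1 + Y) * S) * S⁻¹
        = (S * S) * (1 + Y) * (S * S⁻¹) := by noncomm_ring
      _ = A + A * Y := by rw [hSinv, ← hS2, pow_two]; noncomm_ring
  rw [hsq]
  have hsqH : (A + A * Y)ᴴ = A + Y * A := by
    have hYH' : Yᴴ = Y := by
      have := hYH
      rw [Matrix.conjTranspose_add, Matrix.conjTranspose_one] at this
      exact add_left_cancel this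
    rw [Matrix.conjTranspose_add, Matrix.conjTranspose_mul, hAH, hYH']
  rw [hsqH, two_smul, hXeq]
  abel
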